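/- Let m be an odd positive integer, let ℓ_m be the minimal degree of the irreducible factors in (Z/2)[X] of (X^m − 1)/(X − 1), and let d be an integer with ℓ_m ≤ d < m. Then the number of ideals of R_m of Z/2-dimension d that are contained in J_m is at most m^{d/ℓ_m} (real exponent d/ℓ_m). -/

import Mathlib

set_option synthInstance.maxHeartbeats 1000000
set_option maxHeartbeats 1000000
set_option linter.unusedVariables false


open Polynomial

noncomputable section

/-- The polynomial `X^m - 1` over `Z/2`. -/
def fm (m : ℕ) : Polynomial (ZMod 2) := X ^ m - 1

/-- The polynomial `X^m - 1` over `Z/4`. -/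
def fm4 (m : ℕ) : Polynomial (ZMod 4) := X ^ m - 1

/-- `R_m = (Z/2)[X]/⟨X^m - 1⟩`. -/
abbrev R2 (m : ℕ) : Type := Polynomial (ZMod 2) ⧸ Ideal.span {fm m}

/-- `R'_m = (Z/4)[X]/⟨X^m - 1⟩`. -/
abbrev R4 (m : ℕ) : Type := Polynomial (ZMod 4) ⧸ Ideal.span {fm4 m}

def mk2 (m : ℕ) : Polynomial (ZMod 2) →+* R2 m := Ideal.Quotient.mk _

def mk4 (m : ℕ) : Polynomial (ZMod 4) →+* R4 m := Ideal.Quotient.mk _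

/-- The canonical representative (of degree `< m`) of an element of `R2 m`. -/
def rep2 (m : ℕ) (r : R2 m) : Polynomial (ZMod 2) :=
  (Function.surjInv (Ideal.Quotient.mk_surjective (I := Ideal.span {fm m})) r) %ₘ fm m

/-- The canonical representative (of degree `< m`) of an element of `R4 m`. -/
def rep4 (m : ℕ) (r : R4 m) : Polynomial (ZMod 4) :=
  (Function.surjInv (Ideal.Quotient.mk_surjective (I := Ideal.span {fm4 m})) r) %ₘ fm4 m

/-- Coefficientwise doubling map `(Z/2)[X] → (Z/4)[X]`, `a ↦ 2a` on each coefficient. -/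
def polyDbl (p : Polynomial (ZMod 2)) : Polynomial (ZMod 4) :=
  ∑ i ∈ p.support, Polynomial.C (2 * ((p.coeff i).val : ZMod 4)) * X ^ i

/-- The additive embedding `R_m → R'_m`, `f ↦ 2f`. -/
def iota (m : ℕ) (r : R2 m) : R4 m := mk4 m (polyDbl (rep2 m r))

/-- Hamming weight of an element of `R_m` (of its coefficient vector). -/
def wt2 (m : ℕ) (r : R2 m) : ℕ := (rep2 m r).support.card

/-- Lee weight of an element of `Z/4`. -/
def lee (x : ZMod 4) : ℕ := min x.val (4 - x.val)

/-- Lee weight of an element of `R'_m` (of its coefficient vector). -/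
def wtLee (m : ℕ) (r : R4 m) : ℕ := ∑ i ∈ (rep4 m r).support, lee ((rep4 m r).coeff i)

/-- The augmentation ideal `J_m = ⟨X - 1⟩` of `R_m`. -/
def Jm (m : ℕ) : Ideal (R2 m) := Ideal.span {mk2 m (X - 1)}

/-- The `Z2Z4`-additive cyclic code `C_{a,b} = {(f·a, 2(f·b)) : f ∈ R_m}`. -/
def Cab (m : ℕ) (a b : R2 m) : Set (R2 m × R4 m) :=
  {w | ∃ f : R2 m, w = (f * a, iota m (f * b))}

/-- Dimension of `C_{a,b}` as a vector space over `Z/2`, i.e. `log₂ |C_{a,b}|`. -/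
def dimCab (m : ℕ) (a b : R2 m) : ℕ := Nat.log 2 (Nat.card (Cab m a b))

/-- `(X^m - 1)/(X - 1) = X^{m-1} + ⋯ + X + 1` over `Z/2`. -/
def geomPoly (m : ℕ) : Polynomial (ZMod 2) := ∑ i ∈ Finset.range m, X ^ i

/-- `ℓ_m`: minimal degree of the irreducible factors of `(X^m-1)/(X-1)` in `(Z/2)[X]`. -/
def ell (m : ℕ) : ℕ :=
  sInf {d | ∃ p : Polynomial (ZMod 2), Irreducible p ∧ p ∣ geomPoly m ∧ p.natDegree = d}

/-- The binary entropy function `H(x) = -x·log₂x - (1-x)·log₂(1-x)`. -/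
def Hent (x : ℝ) : ℝ := -(x * Real.logb 2 x) - (1 - x) * Real.logb 2 (1 - x)


open UniqueFactorizationMonoid


instance aux_uniqueUnits : Unique (Polynomial (ZMod 2))ˣ := by
  refine ⟨⟨1⟩, fun u => ?_⟩
  obtain ⟨r, hr, hcr⟩ := Polynomial.isUnit_iff.mp u.isUnit
  have hr1 : r = 1 := by
    have : ∀ s : ZMod 2, IsUnit s → s = 1 := by decide
    exact this r hr
  have : (u : Polynomial (ZMod 2)) = 1 := by rw [← hcr, hr1, map_one]
  exact Units.ext (this.trans rfl)

lemma aux_zmod2cases : ∀ c : ZMod 2, c = 0 ∨ c = 1 := by decide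

def aux_addLinear {A B : Type*} [AddCommGroup A] [AddCommGroup B] [Module (ZMod 2) A]
    [Module (ZMod 2) B] (e : A ≃+ B) : A ≃ₗ[ZMod 2] B :=
  { e with
    map_smul' := by
      intro c x
      rcases aux_zmod2cases c with h | h <;> simp [h] }

lemma aux_finrank_quot (g : Polynomial (ZMod 2)) (hg : g ≠ 0) :
    Module.finrank (ZMod 2) (Polynomial (ZMod 2) ⧸ Ideal.span {g}) = g.natDegree :=
  (AdjoinRoot.powerBasis hg).finrank

lemma aux_fm_eq (m : ℕ) : fm m = geomPoly m * (X - 1) := by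
  rw [fm, geomPoly, geom_sum_mul]

lemma aux_fm_monic (m : ℕ) (hm : 0 < m) : (fm m).Monic := by
  have : fm m = X ^ m - C 1 := by simp [fm]
  rw [this]; exact monic_X_pow_sub_C 1 hm.ne'

lemma aux_fm_natDegree (m : ℕ) (hm : 0 < m) : (fm m).natDegree = m := by
  have : fm m = X ^ m - C 1 := by simp [fm]
  rw [this, natDegree_X_pow_sub_C]

lemma aux_fm_sqfree (m : ℕ) (hm : Odd m) : Squarefree (fm m) := by
  have h : ((m : ZMod 2)) ≠ 0 := by
    have hm' := Nat.odd_iff.mp hm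
    rw [Ne, ZMod.natCast_eq_zero_iff]
    omega
  exact (Polynomial.X_pow_sub_one_separable_iff.mpr h).squarefree

lemma aux_Xsub1_natDegree : ((X : Polynomial (ZMod 2)) - 1).natDegree = 1 := by
  rw [show ((X : Polynomial (ZMod 2)) - 1) = X - C 1 by simp, natDegree_X_sub_C]

lemma aux_ell_pos (m : ℕ) (hm : 2 ≤ m) : 0 < ell m := by
  have hdeg : (geomPoly m).natDegree = m - 1 := by
    have h1 := aux_fm_natDegree m (by omega)
    have h2 : (fm m).natDegree = (geomPoly m).natDegree + 1 := by
      rw [aux_fm_eq, natDegree_mul, aux_Xsub1_natDegree]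
      · intro h
        rw [aux_fm_eq, h, zero_mul] at h1
        simp [fm] at h1
        omega
      · intro h
        have := aux_Xsub1_natDegree
        rw [h] at this
        simp at this
    omega
  have hne : Set.Nonempty {d | ∃ p : Polynomial (ZMod 2),
      Irreducible p ∧ p ∣ geomPoly m ∧ p.natDegree = d} := by
    have hnu : ¬ IsUnit (geomPoly m) := by
      intro h
      have := natDegree_eq_zero_of_isUnit h
      omega
    have h0 : geomPoly m ≠ 0 := by
      intro h
      rw [h] at hdeg
      simp at hdeg
      omega
    obtain ⟨p, hpirr, hpdvd⟩ := WfDvdMonoid.exists_irreducible_factor hnu h0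
    exact ⟨p.natDegree, p, hpirr, hpdvd, rfl⟩
  rw [ell, pos_iff_ne_zero, Ne, Nat.sInf_eq_zero]
  push_neg
  refine ⟨?_, hne⟩
  rintro ⟨p, hpirr, -, hp0⟩
  exact hpirr.natDegree_pos.ne' hp0

-- ==== STEP B ====

def aux_gen (m : ℕ) (I : Ideal (R2 m)) : Polynomial (ZMod 2) :=
  Submodule.IsPrincipal.generator (Ideal.comap (mk2 m) I)

lemma aux_gen_span (m : ℕ) (I : Ideal (R2 m)) :
    Ideal.span {aux_gen m I} = Ideal.comap (mk2 m) I :=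
  Ideal.span_singleton_generator _

lemma aux_gen_injective (m : ℕ) : Function.Injective (aux_gen m) := by
  intro I J h
  have := congrArg (Ideal.span (α := Polynomial (ZMod 2)) ∘ fun g => ({g} : Set _)) h
  simp only [Function.comp, aux_gen_span] at this
  exact Ideal.comap_injective_of_surjective (mk2 m) Ideal.Quotient.mk_surjective this

lemma aux_gen_dvd (m : ℕ) (I : Ideal (R2 m)) : aux_gen m I ∣ fm m := by
  rw [← Ideal.mem_span_singleton, aux_gen_span]
  show mk2 m (fm m) ∈ I
  have : mk2 m (fm m) = 0 := by
    rw [mk2, Ideal.Quotient.eq_zero_iff_mem]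
    exact Ideal.subset_span rfl
  rw [this]; exact I.zero_mem

lemma aux_gen_ne_zero (m : ℕ) (hm : 0 < m) (I : Ideal (R2 m)) : aux_gen m I ≠ 0 := by
  intro h
  have := aux_gen_dvd m I
  rw [h] at this
  exact (aux_fm_monic m hm).ne_zero (zero_dvd_iff.mp this)

lemma aux_gen_monic (m : ℕ) (hm : 0 < m) (I : Ideal (R2 m)) : (aux_gen m I).Monic := by
  have h0 := aux_gen_ne_zero m hm I
  have h : (aux_gen m I).leadingCoeff ≠ 0 := leadingCoeff_ne_zero.mpr h0
  rcases aux_zmod2cases (aux_gen m I).leadingCoeff with h1 | h1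
  · exact absurd h1 h
  · exact h1

lemma aux_gen_X_sub_one_dvd (m : ℕ) (I : Ideal (R2 m)) (hI : I ≤ Jm m) :
    (X - 1) ∣ aux_gen m I := by
  have h1 : Ideal.comap (mk2 m) I ≤ Ideal.span {X - 1} := by
    have h2 : Ideal.comap (mk2 m) (Jm m) ≤ Ideal.span {X - 1} := by
      have : Jm m = Ideal.map (mk2 m) (Ideal.span {X - 1}) := by
        rw [Ideal.map_span]; simp [Jm]
      rw [this, Ideal.comap_map_of_surjective (mk2 m) Ideal.Quotient.mk_surjective]
      apply sup_le le_rfl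
      rw [← RingHom.ker_eq_comap_bot, mk2, Ideal.mk_ker, Ideal.span_le]
      intro x hx
      rw [Set.mem_singleton_iff] at hx
      subst hx
      rw [SetLike.mem_coe, Ideal.mem_span_singleton, aux_fm_eq]
      exact Dvd.intro_left _ rfl
    exact le_trans (Ideal.comap_mono hI) h2
  have : aux_gen m I ∈ Ideal.span {X - 1} :=
    h1 (by rw [← aux_gen_span]; exact Ideal.subset_span rfl)
  rwa [Ideal.mem_span_singleton] at this

lemma aux_gen_natDegree (m d : ℕ) (hm : 0 < m) (I : Ideal (R2 m))
    (hd : Module.finrank (ZMod 2) I = d) (hdm : d ≤ m) :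
    (aux_gen m I).natDegree = m - d := by
  haveI : Module.Finite (ZMod 2) (R2 m) :=
    Module.Finite.of_basis (AdjoinRoot.powerBasis (f := fm m)
      ((aux_fm_monic m hm).ne_zero)).basis
  have hle : Ideal.span {fm m} ≤ Ideal.span {aux_gen m I} := by
    rw [Ideal.span_le]
    intro x hx
    rw [Set.mem_singleton_iff] at hx
    subst hx
    rw [SetLike.mem_coe, Ideal.mem_span_singleton]
    exact aux_gen_dvd m I
  have hmap : (Ideal.span {aux_gen m I}).map (Ideal.Quotient.mk (Ideal.span {fm m})) = I := by
    rw [aux_gen_span (m := m) I]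
    exact Ideal.map_comap_of_surjective (mk2 m) Ideal.Quotient.mk_surjective I
  have e2' := DoubleQuot.quotQuotEquivQuotOfLE hle
  rw [hmap] at e2'
  have e2 : (R2 m ⧸ I) ≃+* Polynomial (ZMod 2) ⧸ Ideal.span {aux_gen m I} := e2'
  have hq : Module.finrank (ZMod 2) (R2 m ⧸ I) = (aux_gen m I).natDegree := by
    rw [← aux_finrank_quot _ (aux_gen_ne_zero m hm I)]
    exact (aux_addLinear e2.toAddEquiv).finrank_eq
  have hrank := Submodule.finrank_quotient_add_finrank (I.restrictScalars (ZMod 2))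
  have e1 : (R2 m ⧸ I.restrictScalars (ZMod 2)) ≃ₗ[ZMod 2] R2 m ⧸ I :=
    Submodule.Quotient.restrictScalarsEquiv (ZMod 2) I
  have hNI : Module.finrank (ZMod 2) (I.restrictScalars (ZMod 2)) = d := hd
  have hR : Module.finrank (ZMod 2) (R2 m) = m :=
    (aux_finrank_quot _ ((aux_fm_monic m hm).ne_zero)).trans (aux_fm_natDegree m hm)
  rw [e1.finrank_eq, hq, hNI, hR] at hrank
  omega

-- ==== STEP C ====

lemma aux_compl_props (m d : ℕ) (hm : Odd m) (hd : 1 ≤ d) (hdm : d < m)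
    (g k : Polynomial (ZMod 2)) (hmonic : g.Monic)
    (hX1 : (X - 1) ∣ g) (hdeg : g.natDegree = m - d) (hk : g * k = fm m) :
    k ≠ 0 ∧ k.natDegree = d ∧ Squarefree k ∧ ¬ ((X - 1) ∣ k) := by
  have hmpos : 0 < m := by omega
  have hfne : fm m ≠ 0 := (aux_fm_monic m hmpos).ne_zero
  have hkne : k ≠ 0 := by intro h; rw [h, mul_zero] at hk; exact hfne hk.symm
  refine ⟨hkne, ?_, ?_, ?_⟩
  · have hgne : g ≠ 0 := hmonic.ne_zero
    have := aux_fm_natDegree m hmpos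
    rw [← hk, natDegree_mul hgne hkne] at this
    omega
  · exact (aux_fm_sqfree m hm).squarefree_of_dvd ⟨g, by rw [← hk]; ring⟩
  · intro hdk
    have h2 : (X - 1) * (X - 1) ∣ fm m := by
      obtain ⟨a, ha⟩ := hX1
      obtain ⟨b, hb⟩ := hdk
      exact ⟨a * b, by rw [← hk, ha, hb]; ring⟩
    have := aux_fm_sqfree m hm _ h2
    have hnd := aux_Xsub1_natDegree
    exact (by omega : (1:ℕ) ≠ 0) (by rw [← hnd, natDegree_eq_zero_of_isUnit this])

lemma aux_mem_P_and_deg (m : ℕ) (hm : Odd m) (k p : Polynomial (ZMod 2))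
    (hkdvd : k ∣ fm m) (hXk : ¬ ((X - 1) ∣ k)) (hp : p ∈ normalizedFactors k) :
    p ∈ normalizedFactors (fm m) ∧ ell m ≤ p.natDegree := by
  have hmpos : 0 < m := hm.pos
  have hfne : fm m ≠ 0 := (aux_fm_monic m hmpos).ne_zero
  have hpirr : Irreducible p := irreducible_of_normalized_factor p hp
  have hpk : p ∣ k := dvd_of_mem_normalizedFactors hp
  have hpf : p ∣ fm m := hpk.trans hkdvd
  constructor
  · obtain ⟨q, hq, hassoc⟩ := exists_mem_normalizedFactors_of_dvd hfne hpirr hpf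
    rwa [associated_iff_eq.mp hassoc]
  · have hprime : Prime p := hpirr.prime
    have hpg : p ∣ geomPoly m := by
      rcases (hprime.dvd_mul.mp (by rwa [← aux_fm_eq])) with h | h
      · exact h
      · exfalso
        have hX1irr : Irreducible ((X : Polynomial (ZMod 2)) - 1) := by
          rw [show ((X : Polynomial (ZMod 2)) - 1) = X - C 1 by simp]
          exact irreducible_X_sub_C 1
        have hass : Associated p (X - 1) := hpirr.associated_of_dvd hX1irr h
        rw [associated_iff_eq.mp hass] at hpk
        exact hXk hpk
    exact Nat.sInf_le ⟨p, hpirr, hpg, rfl⟩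

lemma aux_card_nf_le (q : Polynomial (ZMod 2)) (hq : q ≠ 0) (b : ℕ)
    (hb : ∀ p ∈ normalizedFactors q, b ≤ p.natDegree) :
    (normalizedFactors q).card * b ≤ q.natDegree := by
  set t := normalizedFactors q with ht
  have hprod : t.prod = q := associated_iff_eq.mp (prod_normalizedFactors hq)
  have h0 : (0 : Polynomial (ZMod 2)) ∉ t := zero_notMem_normalizedFactors q
  have hdeg : q.natDegree = (t.map natDegree).sum := by
    rw [← hprod, natDegree_multiset_prod _ h0]
  rw [hdeg]
  calc t.card * b
      = (t.map natDegree).card • b := by rw [Multiset.card_map, smul_eq_mul]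
    _ ≤ (t.map natDegree).sum := by
        apply Multiset.card_nsmul_le_sum
        intro x hx
        obtain ⟨p, hp, rfl⟩ := Multiset.mem_map.mp hx
        exact hb p hp

noncomputable instance aux_polyLO : LinearOrder (Polynomial (ZMod 2)) :=
  IsWellOrder.linearOrder WellOrderingRel

def padFun {α : Type*} [LinearOrder α] (K : ℕ) (s : Finset α) (hs : s.Nonempty) : Fin K → α :=
  fun i => (s.sort (· ≤ ·)).getD i (s.min' hs)

lemma padFun_mem {α : Type*} [LinearOrder α] (K : ℕ) (s : Finset α) (hs : s.Nonempty)
    (i : Fin K) : padFun K s hs i ∈ s := by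
  set l := s.sort (· ≤ ·) with hl
  by_cases h : (i : ℕ) < l.length
  · have hg : l.getD i (s.min' hs) = l.get ⟨i, h⟩ := List.getD_eq_getElem l _ h
    rw [padFun, ← hl, hg, ← Finset.mem_sort (· ≤ ·), ← hl]
    exact l.get_mem _
  · have hg : l.getD i (s.min' hs) = s.min' hs := by
      apply List.getD_eq_default
      omega
    rw [padFun, ← hl, hg]
    exact s.min'_mem hs

lemma padFun_surj {α : Type*} [LinearOrder α] (K : ℕ) (s : Finset α) (hs : s.Nonempty)
    (hcard : s.card ≤ K) {x : α} (hx : x ∈ s) : ∃ i : Fin K, padFun K s hs i = x := by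
  set l := s.sort (· ≤ ·) with hl
  have hxl : x ∈ l := by rw [hl, Finset.mem_sort]; exact hx
  obtain ⟨⟨j, hj⟩, hget⟩ := List.mem_iff_get.mp hxl
  have hlen : l.length = s.card := by rw [hl]; exact Finset.length_sort _
  refine ⟨⟨j, by omega⟩, ?_⟩
  rw [padFun, ← hl]
  have : l.getD j (s.min' hs) = l.get ⟨j, hj⟩ := List.getD_eq_getElem l _ hj
  rw [this, hget]

lemma padFun_inj {α : Type*} [LinearOrder α] (K : ℕ) (s t : Finset α)
    (hs : s.Nonempty) (ht : t.Nonempty) (hsc : s.card ≤ K) (htc : t.card ≤ K)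
    (h : padFun K s hs = padFun K t ht) : s = t := by
  apply Finset.Subset.antisymm <;> intro x hx
  · obtain ⟨i, hi⟩ := padFun_surj K s hs hsc hx
    rw [h] at hi
    exact hi ▸ padFun_mem K t ht i
  · obtain ⟨i, hi⟩ := padFun_surj K t ht htc hx
    rw [← h] at hi
    exact hi ▸ padFun_mem K s hs i

/-- For `ℓ_m ≤ d < m`, the number of ideals of `R_m` of `Z/2`-dimension
`d` contained in `J_m` is at most `m^{d/ℓ_m}` (real exponent). -/
theorem statement5 (m : ℕ) (hm : Odd m) (hmpos : 0 < m)
    (d : ℕ) (hd1 : ell m ≤ d) (hd2 : d < m) :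
    (Nat.card {I : Ideal (R2 m) // I ≤ Jm m ∧ Module.finrank (ZMod 2) I = d} : ℝ)
      ≤ (m : ℝ) ^ ((d : ℝ) / (ell m : ℝ)) := by
  classical
  by_cases hd0 : d = 0
  · subst hd0
    haveI : Module.Finite (ZMod 2) (R2 m) :=
      Module.Finite.of_basis (AdjoinRoot.powerBasis (f := fm m)
        ((aux_fm_monic m hmpos).ne_zero)).basis
    have hsub : Subsingleton {I : Ideal (R2 m) // I ≤ Jm m ∧
        Module.finrank (ZMod 2) I = 0} := by
      constructor
      intro a b
      have hbot : ∀ (I : Ideal (R2 m)), Module.finrank (ZMod 2) I = 0 → I = ⊥ := by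
        intro I hI
        have h0 : Module.finrank (ZMod 2) (I.restrictScalars (ZMod 2)) = 0 := hI
        have := Submodule.finrank_eq_zero.mp h0
        rwa [Submodule.restrictScalars_eq_bot_iff] at this
      apply Subtype.ext
      rw [hbot a.1 a.2.2, hbot b.1 b.2.2]
    have hcard : Nat.card {I : Ideal (R2 m) // I ≤ Jm m ∧
        Module.finrank (ZMod 2) I = 0} ≤ 1 := by
      rcases isEmpty_or_nonempty {I : Ideal (R2 m) // I ≤ Jm m ∧
          Module.finrank (ZMod 2) I = 0} with h | h
      · rw [Nat.card_of_isEmpty]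
        omega
      · haveI := hsub
        exact le_of_eq Nat.card_unique
    calc (Nat.card {I : Ideal (R2 m) // I ≤ Jm m ∧
        Module.finrank (ZMod 2) I = 0} : ℝ) ≤ 1 := by exact_mod_cast hcard
      _ = (m : ℝ) ^ (((0:ℕ) : ℝ) / (ell m : ℝ)) := by
          rw [Nat.cast_zero, zero_div, Real.rpow_zero]
  · -- main case
    have hd : 1 ≤ d := by omega
    have hm2 : 2 ≤ m := by omega
    have hℓ : 0 < ell m := aux_ell_pos m hm2
    set K := d / ell m with hK
    set P : Finset (Polynomial (ZMod 2)) :=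
      (normalizedFactors (fm m)).toFinset with hP
    set Sub := {I : Ideal (R2 m) // I ≤ Jm m ∧ Module.finrank (ZMod 2) I = d} with hSub
    have hfne : fm m ≠ 0 := (aux_fm_monic m hmpos).ne_zero
    have hGmonic : ∀ x : Sub, (aux_gen m x.1).Monic := fun x => aux_gen_monic m hmpos x.1
    have hGdeg : ∀ x : Sub, (aux_gen m x.1).natDegree = m - d :=
      fun x => aux_gen_natDegree m d hmpos x.1 x.2.2 (by omega)
    have hGX1 : ∀ x : Sub, (X - 1) ∣ aux_gen m x.1 :=
      fun x => aux_gen_X_sub_one_dvd m x.1 x.2.1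
    set Kp : Sub → Polynomial (ZMod 2) := fun x => fm m /ₘ (aux_gen m x.1) with hKp
    have hGK : ∀ x : Sub, aux_gen m x.1 * Kp x = fm m := by
      intro x
      have h := Polynomial.modByMonic_add_div (fm m) (aux_gen m x.1)
      have h0 : fm m %ₘ aux_gen m x.1 = 0 :=
        (Polynomial.modByMonic_eq_zero_iff_dvd (hGmonic x)).mpr (aux_gen_dvd m x.1)
      rw [h0, zero_add] at h
      exact h
    have hKprops : ∀ x : Sub, Kp x ≠ 0 ∧ (Kp x).natDegree = d ∧ Squarefree (Kp x)
        ∧ ¬ ((X - 1) ∣ Kp x) :=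
      fun x => aux_compl_props m d hm hd hd2 _ _ (hGmonic x) (hGX1 x) (hGdeg x) (hGK x)
    have hKdvd : ∀ x : Sub, Kp x ∣ fm m := fun x => ⟨aux_gen m x.1, by rw [mul_comm (Kp x)]; exact (hGK x).symm⟩
    set S : Sub → Finset (Polynomial (ZMod 2)) :=
      fun x => (normalizedFactors (Kp x)).toFinset with hS
    have hSP : ∀ x : Sub, ∀ p ∈ S x, p ∈ P := by
      intro x p hp
      rw [hS, Multiset.mem_toFinset] at hp
      rw [hP, Multiset.mem_toFinset]
      exact (aux_mem_P_and_deg m hm (Kp x) p (hKdvd x) (hKprops x).2.2.2 hp).1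
    have hSne : ∀ x : Sub, (S x).Nonempty := by
      intro x
      rw [hS, Finset.nonempty_iff_ne_empty]
      intro h
      have h2 : normalizedFactors (Kp x) = 0 := by
        rwa [Multiset.toFinset_eq_empty] at h
      have h4 := associated_iff_eq.mp (prod_normalizedFactors (hKprops x).1)
      rw [h2, Multiset.prod_zero] at h4
      have h5 := (hKprops x).2.1
      rw [← h4] at h5
      simp at h5
      omega
    have hScard : ∀ x : Sub, (S x).card ≤ K := by
      intro x
      have h1 : (normalizedFactors (Kp x)).card * ell m ≤ d := by
        have := aux_card_nf_le (Kp x) (hKprops x).1 (ell m)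
          (fun p hp => (aux_mem_P_and_deg m hm (Kp x) p (hKdvd x) (hKprops x).2.2.2 hp).2)
        rwa [(hKprops x).2.1] at this
      have h2 : (S x).card ≤ (normalizedFactors (Kp x)).card := Multiset.toFinset_card_le _
      rw [hK, Nat.le_div_iff_mul_le hℓ]
      calc (S x).card * ell m ≤ (normalizedFactors (Kp x)).card * ell m :=
            Nat.mul_le_mul_right _ h2
        _ ≤ d := h1
    set Φ : Sub → (Fin K → {p // p ∈ P}) :=
      fun x i => ⟨padFun K (S x) (hSne x) i, hSP x _ (padFun_mem K (S x) (hSne x) i)⟩ with hΦ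
    have hΦinj : Function.Injective Φ := by
      intro x y hxy
      have hpad : padFun K (S x) (hSne x) = padFun K (S y) (hSne y) := by
        funext i
        exact congrArg Subtype.val (congrFun hxy i)
      have hSxy : S x = S y := padFun_inj K _ _ (hSne x) (hSne y) (hScard x) (hScard y) hpad
      have hndx : (normalizedFactors (Kp x)).Nodup :=
        (squarefree_iff_nodup_normalizedFactors (hKprops x).1).mp (hKprops x).2.2.1
      have hndy : (normalizedFactors (Kp y)).Nodup :=
        (squarefree_iff_nodup_normalizedFactors (hKprops y).1).mp (hKprops y).2.2.1
      have hnf : normalizedFactors (Kp x) = normalizedFactors (Kp y) := by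
        have h1 : (normalizedFactors (Kp x)).dedup = (normalizedFactors (Kp y)).dedup := by
          have h2 := congrArg Finset.val hSxy
          simpa only [hS, Multiset.toFinset_val] using h2
        rwa [Multiset.dedup_eq_self.mpr hndx, Multiset.dedup_eq_self.mpr hndy] at h1
      have hk : Kp x = Kp y := by
        rw [← associated_iff_eq.mp (prod_normalizedFactors (hKprops x).1),
            ← associated_iff_eq.mp (prod_normalizedFactors (hKprops y).1), hnf]
      have hgg : aux_gen m x.1 * Kp x = aux_gen m y.1 * Kp x := by
        conv_rhs => rw [hk]
        rw [hGK x, hGK y]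
      have hg := mul_right_cancel₀ (hKprops x).1 hgg
      exact Subtype.ext (aux_gen_injective m hg)
    haveI : Fintype {p // p ∈ P} := FinsetCoe.fintype P
    have hcard1 : Nat.card Sub ≤ Nat.card (Fin K → {p // p ∈ P}) :=
      Nat.card_le_card_of_injective Φ hΦinj
    have hcard2 : Nat.card (Fin K → {p // p ∈ P}) = P.card ^ K := by
      rw [Nat.card_fun]
      congr 1
      · rw [Nat.card_eq_fintype_card, Fintype.card_coe]
      · rw [Nat.card_eq_fintype_card, Fintype.card_fin]
    have hPm : P.card ≤ m := by
      have h1 : (normalizedFactors (fm m)).card * 1 ≤ (fm m).natDegree :=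
        aux_card_nf_le (fm m) hfne 1
          (fun p hp => (irreducible_of_normalized_factor p hp).natDegree_pos)
      have h2 : P.card ≤ (normalizedFactors (fm m)).card := Multiset.toFinset_card_le _
      rw [aux_fm_natDegree m hmpos] at h1
      omega
    have hfinal : Nat.card Sub ≤ m ^ K := by
      calc Nat.card Sub ≤ P.card ^ K := by rw [← hcard2]; exact hcard1
        _ ≤ m ^ K := Nat.pow_le_pow_left hPm K
    calc (Nat.card Sub : ℝ) ≤ ((m ^ K : ℕ) : ℝ) := by exact_mod_cast hfinal
      _ = (m : ℝ) ^ (K : ℝ) := by rw [Nat.cast_pow, Real.rpow_natCast]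
      _ ≤ (m : ℝ) ^ ((d : ℝ) / (ell m : ℝ)) := by
          apply Real.rpow_le_rpow_of_exponent_le
          · exact_mod_cast hmpos
          · exact_mod_cast Nat.cast_div_le (α := ℝ)

end
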